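/- Let E be a (possibly uncountable) directed graph. Then E is the direct limit, in the category of graphs with CK-morphisms, of a directed system of countable subgraphs, and consequently the graph monoid M̄_E is the direct limit of the graph monoids M̄_{E_i}: the canonical map ψ from the colimit of the M̄_{E_i} to M̄_{E_∞} induced by the maps M̄(φ_{i,∞}) is a monoid isomorphism. -/

import Mathlib

attribute [local instance] Classical.propDecidable

/-- A directed graph: vertices, edges, and source/range maps. -/
structure DGraph where
  V : Type
  E : Type
  s : E → V
  r : E → V

namespace DGraph

/-- The set of edges emitted by a vertex. -/
def emit (G : DGraph) (v : G.V) : Set G.E := {e | G.s e = v}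

/-- A regular vertex: emits a nonzero finite number of edges. -/
def Regular (G : DGraph) (v : G.V) : Prop := (G.emit v).Finite ∧ (G.emit v).Nonempty

/-- An infinite emitter: emits infinitely many edges. -/
def InfEmitter (G : DGraph) (v : G.V) : Prop := (G.emit v).Infinite

end DGraph

/-- The extra generators `a_{v,S}` of the graph monoid: `v` an infinite emitter and
`S` a finite non-empty subset of `s⁻¹(v)`. -/
def InfGen (G : DGraph) : Type :=
  {x : G.V × Finset G.E // G.InfEmitter x.1 ∧ x.2.Nonempty ∧ ∀ e ∈ x.2, G.s e = x.1}

/-- The generators of the graph monoid `M̄_E`: one generator `a_v` per vertex, and one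
generator `a_{v,S}` per infinite emitter `v` and finite non-empty `S ⊆ s⁻¹(v)`. -/
abbrev MGen (G : DGraph) : Type := G.V ⊕ InfGen G

/-- The defining relations of the graph monoid `M̄_E` on the free commutative monoid
(`Multiset`) on the generators. -/
inductive MRel (G : DGraph) : Multiset (MGen G) → Multiset (MGen G) → Prop
  | reg (v : G.V) (h : (G.emit v).Finite) (hne : (G.emit v).Nonempty) :
      MRel G {Sum.inl v} (h.toFinset.val.map fun e => (Sum.inl (G.r e) : MGen G))
  | inf (x : InfGen G) :
      MRel G {Sum.inl x.1.1}
        ({Sum.inr x} + x.1.2.val.map fun e => (Sum.inl (G.r e) : MGen G))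
  | exch (x y : InfGen G) : x.1.1 = y.1.1 →
      MRel G
        ({Sum.inr x} + ((x.1.2 \ y.1.2).val.map fun e => (Sum.inl (G.r e) : MGen G)))
        ({Sum.inr y} + ((y.1.2 \ x.1.2).val.map fun e => (Sum.inl (G.r e) : MGen G)))

/-- The graph monoid `M̄_E` of a directed graph. -/
def Mbar (G : DGraph) : Type := (addConGen (MRel G)).Quotient

noncomputable instance (G : DGraph) : AddCommMonoid (Mbar G) := by
  unfold Mbar; infer_instance

/-- The generator `a_v` of `M̄_E`. -/
def genV (G : DGraph) (v : G.V) : Mbar G := (addConGen (MRel G)).mk' {Sum.inl v}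

/-- The generator `a_{v,S}` of `M̄_E`. -/
def genS (G : DGraph) (x : InfGen G) : Mbar G := (addConGen (MRel G)).mk' {Sum.inr x}

/-- A Leavitt `E`-family in a ring `A`: idempotents `p_v` and elements `t_e, t'_e`
satisfying the defining relations of the Leavitt path algebra. -/
structure LeavittFamily (G : DGraph) (A : Type) [NonUnitalRing A] where
  p : G.V → A
  t : G.E → A
  t' : G.E → A
  p_idem : ∀ v, p v * p v = p v
  p_orth : ∀ v w, v ≠ w → p v * p w = 0
  s_t : ∀ e, p (G.s e) * t e = t e
  t_r : ∀ e, t e * p (G.r e) = t e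
  r_t' : ∀ e, p (G.r e) * t' e = t' e
  t'_s : ∀ e, t' e * p (G.s e) = t' e
  t'_t : ∀ e, t' e * t e = p (G.r e)
  t'_t_orth : ∀ e f, e ≠ f → t' e * t f = 0
  reg : ∀ v (h : (G.emit v).Finite), (G.emit v).Nonempty →
      p v = ∑ e ∈ h.toFinset, t e * t' e

/-- A CK-morphism of directed graphs: a graph morphism that is injective on vertices and
edges and restricts to a bijection `s⁻¹(v) → s⁻¹(η(v))` at every regular vertex `v`. -/
structure CKHom (G H : DGraph) where
  fV : G.V → H.V
  fE : G.E → H.E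
  injV : Function.Injective fV
  injE : Function.Injective fE
  hs : ∀ e, H.s (fE e) = fV (G.s e)
  hr : ∀ e, H.r (fE e) = fV (G.r e)
  reg_surj : ∀ v, G.Regular v → ∀ f, H.s f = fV v → ∃ e, G.s e = v ∧ fE e = f

section AuxPush

variable {A B C : DGraph}

/-- A CK-morphism sends infinite emitters to infinite emitters; push an `InfGen` forward. -/
noncomputable def pushInf (η : CKHom A B) (x : InfGen A) : InfGen B :=
  ⟨(η.fV x.1.1, x.1.2.image η.fE), by
    obtain ⟨hinf, hne, hs⟩ := x.2
    refine ⟨?_, hne.image _, ?_⟩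
    · have h1 : η.fE '' (A.emit x.1.1) ⊆ B.emit (η.fV x.1.1) := by
        rintro f ⟨e, he, rfl⟩
        show B.s (η.fE e) = η.fV x.1.1
        rw [η.hs]; exact congrArg η.fV he
      exact Set.Infinite.mono h1 (hinf.image (η.injE.injOn))
    · intro f hf
      rcases Finset.mem_image.1 hf with ⟨e, he, rfl⟩
      rw [η.hs, hs e he]⟩

lemma pushInf_fst (η : CKHom A B) (x : InfGen A) : (pushInf η x).1.1 = η.fV x.1.1 := rfl

lemma pushInf_snd (η : CKHom A B) (x : InfGen A) :
    (pushInf η x).1.2 = x.1.2.image η.fE := rfl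

lemma pushInf_injective (η : CKHom A B) : Function.Injective (pushInf η) := by
  intro x y h
  apply Subtype.ext
  have h1 := congrArg (fun z : InfGen B => z.1.1) h
  have h2 := congrArg (fun z : InfGen B => z.1.2) h
  simp only [pushInf] at h1 h2
  exact Prod.ext (η.injV h1) (Finset.image_injective η.injE h2)

/-- Pushforward of generators along a CK-morphism. -/
noncomputable def mapGen (η : CKHom A B) : MGen A → MGen B := Sum.map η.fV (pushInf η)

lemma mapGen_injective (η : CKHom A B) : Function.Injective (mapGen η) := by
  rintro (v | x) (w | y) h <;> simp only [mapGen, Sum.map] at h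
  · exact congrArg Sum.inl (η.injV (Sum.inl.inj h))
  · exact absurd h (by simp)
  · exact absurd h (by simp)
  · exact congrArg Sum.inr (pushInf_injective η (Sum.inr.inj h))

/-- Pushforward of multisets of generators. -/
noncomputable def mapMS (η : CKHom A B) (m : Multiset (MGen A)) : Multiset (MGen B) := m.map (mapGen η)

lemma mapMS_injective (η : CKHom A B) : Function.Injective (mapMS η) :=
  Multiset.map_injective (mapGen_injective η)

lemma mapMS_add (η : CKHom A B) (m n : Multiset (MGen A)) :
    mapMS η (m + n) = mapMS η m + mapMS η n := Multiset.map_add _ _ _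

/-- An additive hom out of `Mbar A` which sends generators as induced by a CK-morphism
sends the class of any multiset of generators to the class of the pushed multiset. -/
lemma hom_map_mk' (η : CKHom A B) (F : Mbar A →+ Mbar B)
    (h1 : ∀ v, F (genV A v) = genV B (η.fV v))
    (h2 : ∀ x, F (genS A x) = genS B (pushInf η x)) :
    ∀ m : Multiset (MGen A),
      F ((addConGen (MRel A)).mk' m) = (addConGen (MRel B)).mk' (mapMS η m) := by
  intro m
  induction m using Multiset.induction_on with
  | empty => simp [mapMS]; exact map_zero F
  | cons g m ih =>
    rw [show g ::ₘ m = {g} + m from (Multiset.singleton_add g m).symm]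
    rw [mapMS_add, map_add, map_add]; refine (map_add F _ _).trans ?_; rw [ih]
    congr 1
    cases g with
    | inl v =>
      have : mapMS η ({Sum.inl v} : Multiset (MGen A)) = {Sum.inl (η.fV v)} := by
        simp [mapMS, mapGen]
      rw [this]; exact h1 v
    | inr x =>
      have : mapMS η ({Sum.inr x} : Multiset (MGen A)) = {Sum.inr (pushInf η x)} := by
        simp [mapMS, mapGen]
      rw [this]; exact h2 x

/-- Two additive homs out of `Mbar A` agreeing on generators are equal everywhere. -/
lemma hom_ext_gen {M : Type*} [AddCommMonoid M] (F F' : Mbar A →+ M)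
    (h1 : ∀ v, F (genV A v) = F' (genV A v))
    (h2 : ∀ x, F (genS A x) = F' (genS A x)) : ∀ z : Mbar A, F z = F' z := by
  intro z
  obtain ⟨m, rfl⟩ := AddCon.mk'_surjective z
  induction m using Multiset.induction_on with
  | empty => simp; exact (map_zero F).trans (map_zero F').symm
  | cons g m ih =>
    rw [show g ::ₘ m = {g} + m from (Multiset.singleton_add g m).symm]
    rw [map_add]; refine (map_add F _ _).trans (Eq.trans ?_ (map_add F' _ _).symm); rw [ih]
    congr 1
    cases g with
    | inl v => exact h1 v
    | inr x => exact h2 x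

end AuxPush

section Subgraphs

variable (G : DGraph)

/-- For each infinite emitter, a fixed countably infinite subset of its emitted edges. -/
noncomputable def Wset (v : G.V) : Set G.E :=
  if h : (G.emit v).Infinite then Set.range (fun n => (Set.Infinite.natEmbedding _ h n).1) else ∅

lemma Wset_subset (v : G.V) : Wset G v ⊆ G.emit v := by
  unfold Wset
  split
  · rintro e ⟨n, rfl⟩; exact (Set.Infinite.natEmbedding _ ‹(G.emit v).Infinite› n).2
  · exact (Set.empty_subset _)

lemma Wset_countable (v : G.V) : (Wset G v).Countable := by
  unfold Wset; split
  · exact Set.countable_range _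
  · exact Set.countable_empty

lemma Wset_infinite (v : G.V) (h : (G.emit v).Infinite) : (Wset G v).Infinite := by
  unfold Wset; rw [dif_pos h]
  exact Set.infinite_range_of_injective (Subtype.val_injective.comp (Set.Infinite.natEmbedding _ h).injective)

/-- A pair of vertex/edge sets closed under the operations needed to form a complete
(CK-) subgraph. -/
def Closed (p : Set G.V × Set G.E) : Prop :=
  (∀ e ∈ p.2, G.s e ∈ p.1) ∧ (∀ e ∈ p.2, G.r e ∈ p.1) ∧
  (∀ v ∈ p.1, (G.emit v).Finite → G.emit v ⊆ p.2) ∧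
  (∀ v ∈ p.1, (G.emit v).Infinite → Wset G v ⊆ p.2)

/-- The index type: countable closed pairs of vertex/edge sets. -/
def Idx : Type := {p : Set G.V × Set G.E // p.1.Countable ∧ p.2.Countable ∧ Closed G p}

instance : Preorder (Idx G) := Subtype.preorder _

lemma Idx.le_iff {i j : Idx G} : i ≤ j ↔ i.1.1 ⊆ j.1.1 ∧ i.1.2 ⊆ j.1.2 := Iff.rfl

lemma closed_union {p q : Set G.V × Set G.E} (hp : Closed G p) (hq : Closed G q) :
    Closed G (p.1 ∪ q.1, p.2 ∪ q.2) := by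
  obtain ⟨hp1, hp2, hp3, hp4⟩ := hp
  obtain ⟨hq1, hq2, hq3, hq4⟩ := hq
  refine ⟨?_, ?_, ?_, ?_⟩
  · rintro e (he | he); exacts [Or.inl (hp1 e he), Or.inr (hq1 e he)]
  · rintro e (he | he); exacts [Or.inl (hp2 e he), Or.inr (hq2 e he)]
  · rintro v (hv | hv) hf
    exacts [(hp3 v hv hf).trans Set.subset_union_left,
      (hq3 v hv hf).trans Set.subset_union_right]
  · rintro v (hv | hv) hf
    exacts [(hp4 v hv hf).trans Set.subset_union_left,
      (hq4 v hv hf).trans Set.subset_union_right]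

instance idxDirected : IsDirected (Idx G) (· ≤ ·) := by
  constructor
  intro i j
  refine ⟨⟨(i.1.1 ∪ j.1.1, i.1.2 ∪ j.1.2),
    i.2.1.union j.2.1, i.2.2.1.union j.2.2.1, closed_union G i.2.2.2 j.2.2.2⟩,
    ⟨Set.subset_union_left, Set.subset_union_left⟩,
    ⟨Set.subset_union_right, Set.subset_union_right⟩⟩

/-- One step of the closure operation. -/
def closStep (p : Set G.V × Set G.E) : Set G.V × Set G.E :=
  (p.1 ∪ G.s '' p.2 ∪ G.r '' p.2,
   p.2 ∪ (⋃ v ∈ {v ∈ p.1 | (G.emit v).Finite}, G.emit v) ∪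
     (⋃ v ∈ {v ∈ p.1 | (G.emit v).Infinite}, Wset G v))

lemma closStep_countable {p : Set G.V × Set G.E} (h1 : p.1.Countable) (h2 : p.2.Countable) :
    (closStep G p).1.Countable ∧ (closStep G p).2.Countable := by
  constructor
  · exact (h1.union (h2.image _)).union (h2.image _)
  · refine (h2.union ?_).union ?_
    · exact Set.Countable.biUnion (h1.mono (Set.sep_subset _ _))
        (fun v hv => hv.2.countable)
    · exact Set.Countable.biUnion (h1.mono (Set.sep_subset _ _))
        (fun v _ => Wset_countable G v)

lemma le_closStep (p : Set G.V × Set G.E) :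
    p.1 ⊆ (closStep G p).1 ∧ p.2 ⊆ (closStep G p).2 :=
  ⟨Set.subset_union_left.trans Set.subset_union_left,
   Set.subset_union_left.trans Set.subset_union_left⟩

/-- Closure: every countable pair of sets is contained in a countable closed pair. -/
lemma exists_closure (X : Set G.V) (Y : Set G.E) (hX : X.Countable) (hY : Y.Countable) :
    ∃ i : Idx G, X ⊆ i.1.1 ∧ Y ⊆ i.1.2 := by
  set C : ℕ → Set G.V × Set G.E := fun n => (closStep G)^[n] (X, Y) with hC
  have hCsucc : ∀ n, C (n + 1) = closStep G (C n) := by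
    intro n; rw [hC]; simp [Function.iterate_succ_apply']
  have hmono1 : ∀ n, (C n).1 ⊆ (C (n + 1)).1 := fun n => by
    rw [hCsucc]; exact (le_closStep G (C n)).1
  have hmono2 : ∀ n, (C n).2 ⊆ (C (n + 1)).2 := fun n => by
    rw [hCsucc]; exact (le_closStep G (C n)).2
  have hcnt : ∀ n, (C n).1.Countable ∧ (C n).2.Countable := by
    intro n
    induction n with
    | zero => exact ⟨hX, hY⟩
    | succ n ih => rw [hCsucc]; exact closStep_countable G ih.1 ih.2
  refine ⟨⟨(⋃ n, (C n).1, ⋃ n, (C n).2),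
    Set.countable_iUnion (fun n => (hcnt n).1),
    Set.countable_iUnion (fun n => (hcnt n).2), ?_, ?_, ?_, ?_⟩,
    Set.subset_iUnion (fun n => (C n).1) 0, Set.subset_iUnion (fun n => (C n).2) 0⟩
  · rintro e he
    simp only [Set.mem_iUnion] at he ⊢
    obtain ⟨n, hn⟩ := he
    exact ⟨n + 1, by rw [hCsucc]; exact Or.inl (Or.inr ⟨e, hn, rfl⟩)⟩
  · rintro e he
    simp only [Set.mem_iUnion] at he ⊢
    obtain ⟨n, hn⟩ := he
    exact ⟨n + 1, by rw [hCsucc]; exact Or.inr ⟨e, hn, rfl⟩⟩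
  · rintro v hv hfin e he
    simp only [Set.mem_iUnion] at hv ⊢
    obtain ⟨n, hn⟩ := hv
    refine ⟨n + 1, ?_⟩
    rw [hCsucc]
    exact Or.inl (Or.inr (Set.mem_biUnion ⟨hn, hfin⟩ he))
  · rintro v hv hinf e he
    simp only [Set.mem_iUnion] at hv ⊢
    obtain ⟨n, hn⟩ := hv
    refine ⟨n + 1, ?_⟩
    rw [hCsucc]
    exact Or.inr (Set.mem_biUnion ⟨hn, hinf⟩ he)

/-- The subgraph associated to an index. -/
def SubG (i : Idx G) : DGraph where
  V := ↥i.1.1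
  E := ↥i.1.2
  s e := ⟨G.s e.1, i.2.2.2.1 e.1 e.2⟩
  r e := ⟨G.r e.1, i.2.2.2.2.1 e.1 e.2⟩

lemma emit_SubG (i : Idx G) (v : (SubG G i).V) :
    (SubG G i).emit v = Subtype.val ⁻¹' (G.emit v.1) := by
  ext e
  simp only [DGraph.emit, Set.mem_setOf_eq, Set.mem_preimage, SubG, Subtype.ext_iff]
  exact Subtype.ext_iff

lemma SubG_infEmitter (i : Idx G) (v : (SubG G i).V) (h : (G.emit v.1).Infinite) :
    ((SubG G i).emit v).Infinite := by
  rw [emit_SubG]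
  have hW : Wset G v.1 ⊆ i.1.2 := i.2.2.2.2.2.2 v.1 v.2 h
  have : (Subtype.val ⁻¹' Wset G v.1 : Set ↥i.1.2).Infinite := by
    refine (Wset_infinite G v.1 h).preimage ?_
    rw [Subtype.range_coe]; exact hW
  exact this.mono (Set.preimage_mono (Wset_subset G v.1))

/-- Regularity in a subgraph implies regularity in `G`, with the full emitted edge set
contained in the subgraph. -/
lemma SubG_regular (i : Idx G) (v : (SubG G i).V) (h : (SubG G i).Regular v) :
    (G.emit v.1).Finite ∧ (G.emit v.1).Nonempty ∧ G.emit v.1 ⊆ i.1.2 := by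
  obtain ⟨hfin, hne⟩ := h
  have hGfin : (G.emit v.1).Finite := by
    by_contra hc
    exact (SubG_infEmitter G i v hc).elim hfin
  have hGne : (G.emit v.1).Nonempty := by
    obtain ⟨e, he⟩ := hne
    rw [emit_SubG] at he
    exact ⟨e.1, he⟩
  exact ⟨hGfin, hGne, i.2.2.2.2.2.1 v.1 v.2 hGfin⟩

/-- The inclusion of a subgraph into `G` as a CK-morphism. -/
def inclCK (i : Idx G) : CKHom (SubG G i) G where
  fV := Subtype.val
  fE := Subtype.val
  injV := Subtype.val_injective
  injE := Subtype.val_injective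
  hs _ := rfl
  hr _ := rfl
  reg_surj := by
    intro v hv f hf
    obtain ⟨_, _, hsub⟩ := SubG_regular G i v hv
    have hfY : f ∈ i.1.2 := hsub hf
    exact ⟨⟨f, hfY⟩, Subtype.ext hf, rfl⟩

/-- The inclusion between two subgraphs as a CK-morphism. -/
def stepCK (i j : Idx G) (h : i ≤ j) : CKHom (SubG G i) (SubG G j) where
  fV v := ⟨v.1, h.1 v.2⟩
  fE e := ⟨e.1, h.2 e.2⟩
  injV := by
    intro v w hvw
    have h' := congrArg Subtype.val hvw
    exact Subtype.ext h'
  injE := by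
    intro e f hef
    have h' := congrArg Subtype.val hef
    exact Subtype.ext h'
  hs _ := Subtype.ext rfl
  hr _ := Subtype.ext rfl
  reg_surj := by
    intro v hv f hf
    obtain ⟨_, _, hsub⟩ := SubG_regular G i v hv
    have : G.s f.1 = v.1 := Subtype.ext_iff.1 hf
    have hfY : f.1 ∈ i.1.2 := hsub this
    exact ⟨⟨f.1, hfY⟩, Subtype.ext this, Subtype.ext rfl⟩

lemma stepCK_incl_V (i j : Idx G) (h : i ≤ j) (v : (SubG G i).V) :
    (inclCK G j).fV ((stepCK G i j h).fV v) = (inclCK G i).fV v := rfl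

lemma stepCK_incl_E (i j : Idx G) (h : i ≤ j) (e : (SubG G i).E) :
    (inclCK G j).fE ((stepCK G i j h).fE e) = (inclCK G i).fE e := rfl

end Subgraphs

section Lifting

variable (G : DGraph)

/-- Lift a finset of edges of `G` contained in a subgraph to a finset of subgraph edges. -/
noncomputable def liftF (i : Idx G) (S : Finset G.E) (hS : ∀ e ∈ S, e ∈ i.1.2) :
    Finset (SubG G i).E :=
  S.attach.map ⟨fun e => ⟨e.1, hS e.1 e.2⟩, by
    intro a b hab
    have h' := congrArg Subtype.val hab
    exact Subtype.ext h'⟩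

lemma mem_liftF {i : Idx G} {S : Finset G.E} {hS : ∀ e ∈ S, e ∈ i.1.2}
    {e' : (SubG G i).E} : e' ∈ liftF G i S hS ↔ e'.1 ∈ S := by
  constructor
  · intro h
    obtain ⟨a, _, rfl⟩ := Finset.mem_map.1 h
    exact a.2
  · intro h
    exact Finset.mem_map.2 ⟨⟨e'.1, h⟩, S.mem_attach _, Subtype.ext rfl⟩

lemma liftF_val_map {i : Idx G} {S : Finset G.E} {hS : ∀ e ∈ S, e ∈ i.1.2} :
    (liftF G i S hS).val.map Subtype.val = S.val := by
  have h0 : (liftF G i S hS).val =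
      S.val.attach.map (fun e => (⟨e.1, hS e.1 e.2⟩ : ↥i.1.2)) := rfl
  rw [h0, Multiset.map_map]
  exact Multiset.attach_map_val S.val

lemma liftF_image_val {i : Idx G} {S : Finset G.E} {hS : ∀ e ∈ S, e ∈ i.1.2} :
    (liftF G i S hS).image Subtype.val = S := by
  ext e
  refine Finset.mem_image.trans ?_
  constructor
  · rintro ⟨e', he', rfl⟩; exact mem_liftF G |>.1 he'
  · intro he; exact ⟨⟨e, hS e he⟩, (mem_liftF G).2 he, rfl⟩

lemma liftF_sdiff {i : Idx G} {S T : Finset G.E} {hS : ∀ e ∈ S, e ∈ i.1.2}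
    {hT : ∀ e ∈ T, e ∈ i.1.2} :
    liftF G i S hS \ liftF G i T hT =
      liftF G i (S \ T) (fun e he => hS e (Finset.mem_sdiff.1 he).1) := by
  ext e'
  simp only [Finset.mem_sdiff, mem_liftF]

/-- Lift an `InfGen` of `G` supported in a subgraph. -/
noncomputable def liftInf (i : Idx G) (x : InfGen G) (hv : x.1.1 ∈ i.1.1)
    (hS : ∀ e ∈ x.1.2, e ∈ i.1.2) : InfGen (SubG G i) :=
  ⟨(⟨x.1.1, hv⟩, liftF G i x.1.2 hS), by
    refine ⟨SubG_infEmitter G i _ x.2.1, ?_, ?_⟩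
    · obtain ⟨e, he⟩ := x.2.2.1
      exact ⟨⟨e, hS e he⟩, (mem_liftF G (hS := hS)).2 he⟩
    · intro e he
      exact Subtype.ext (x.2.2.2 e.1 ((mem_liftF G (hS := hS)).1 he))⟩

lemma pushInf_liftInf (i : Idx G) (x : InfGen G) (hv : x.1.1 ∈ i.1.1)
    (hS : ∀ e ∈ x.1.2, e ∈ i.1.2) :
    pushInf (inclCK G i) (liftInf G i x hv hS) = x := by
  apply Subtype.ext
  apply Prod.ext
  · rfl
  · exact liftF_image_val G (hS := hS)

/-- Vertex support of a generator. -/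
def gsuppV : MGen G → Finset G.V := Sum.elim (fun v => {v}) (fun x => {x.1.1})

/-- Edge support of a generator. -/
def gsuppE : MGen G → Finset G.E := Sum.elim (fun _ => ∅) (fun x => x.1.2)

/-- Lift a generator of `G` supported in a subgraph. -/
lemma lift_gen (i : Idx G) (g : MGen G) (hV : ∀ v ∈ gsuppV G g, v ∈ i.1.1)
    (hE : ∀ e ∈ gsuppE G g, e ∈ i.1.2) :
    ∃ g', mapGen (inclCK G i) g' = g := by
  cases g with
  | inl v => exact ⟨Sum.inl ⟨v, hV v (Finset.mem_singleton_self v)⟩, rfl⟩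
  | inr x =>
    refine ⟨Sum.inr (liftInf G i x (hV x.1.1 (Finset.mem_singleton_self _)) hE), ?_⟩
    show Sum.inr (pushInf (inclCK G i) _) = _
    exact congrArg Sum.inr (pushInf_liftInf G i x _ hE)

/-- Lift a multiset of generators of `G` supported in a subgraph. -/
lemma lift_ms (i : Idx G) (m : Multiset (MGen G))
    (h : ∀ g ∈ m, (∀ v ∈ gsuppV G g, v ∈ i.1.1) ∧ (∀ e ∈ gsuppE G g, e ∈ i.1.2)) :
    ∃ m', mapMS (inclCK G i) m' = m := by
  induction m using Multiset.induction_on with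
  | empty => exact ⟨0, rfl⟩
  | cons g m ih =>
    obtain ⟨m', hm'⟩ := ih (fun g' hg' => h g' (Multiset.mem_cons_of_mem hg'))
    obtain ⟨g', hg'⟩ := lift_gen G i g (h g (Multiset.mem_cons_self g m)).1
      (h g (Multiset.mem_cons_self g m)).2
    exact ⟨g' ::ₘ m', by simp only [mapMS, Multiset.map_cons] at *; rw [hg', hm']⟩

/-- Finiteness of the emitted edge set downstairs gives finiteness upstairs. -/
lemma emit_SubG_finite (i : Idx G) (v : (SubG G i).V) (h : (G.emit v.1).Finite) :
    ((SubG G i).emit v).Finite := by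
  rw [emit_SubG]
  exact Set.Finite.preimage Subtype.val_injective.injOn h

lemma emit_SubG_toFinset_map (i : Idx G) (v : (SubG G i).V)
    (h : (G.emit v.1).Finite) (hsub : G.emit v.1 ⊆ i.1.2)
    (h' : ((SubG G i).emit v).Finite) :
    h'.toFinset.val.map Subtype.val = h.toFinset.val := by
  have hnd : (h'.toFinset.val.map Subtype.val).Nodup :=
    h'.toFinset.nodup.map Subtype.val_injective
  rw [Multiset.Nodup.ext hnd h.toFinset.nodup]
  intro e
  constructor
  · intro hmem
    obtain ⟨e', he', rfl⟩ := Multiset.mem_map.1 hmem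
    have := (Set.Finite.mem_toFinset h').1 he'
    rw [emit_SubG] at this
    exact (Set.Finite.mem_toFinset h).2 this
  · intro he
    have he2 : e ∈ G.emit v.1 := (Set.Finite.mem_toFinset h).1 he
    exact Multiset.mem_map.2 ⟨⟨e, hsub he2⟩,
      (Set.Finite.mem_toFinset h').2 (by rw [emit_SubG]; exact he2), rfl⟩

lemma mapMS_edge_multiset (i : Idx G) (T : Finset (SubG G i).E) :
    Multiset.map (mapGen (inclCK G i))
        (T.val.map fun e => (Sum.inl ((SubG G i).r e) : MGen (SubG G i))) =
      (T.val.map Subtype.val).map (fun e => (Sum.inl (G.r e) : MGen G)) := by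
  rw [Multiset.map_map]; refine Eq.trans ?_ (Multiset.map_map _ _ _).symm
  rfl

/-- Key lemma: a relation in `M̄_G` between multisets of generators lifts to all large
enough countable closed subgraphs. -/
lemma lift_rel (a b : Multiset (MGen G)) (h : AddConGen.Rel (MRel G) a b) :
    ∃ (X : Set G.V) (Y : Set G.E), X.Countable ∧ Y.Countable ∧
      ∀ i : Idx G, X ⊆ i.1.1 → Y ⊆ i.1.2 →
        ∃ a' b', mapMS (inclCK G i) a' = a ∧ mapMS (inclCK G i) b' = b ∧
          AddConGen.Rel (MRel (SubG G i)) a' b' := by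
  induction h with
  | of a b hr =>
    cases hr with
    | reg v hfin hne =>
      refine ⟨{v}, G.emit v, Set.countable_singleton v, hfin.countable, ?_⟩
      intro i hX hY
      have hv : v ∈ i.1.1 := hX rfl
      set v' : (SubG G i).V := ⟨v, hv⟩ with hv'
      have h' : ((SubG G i).emit v').Finite := emit_SubG_finite G i v' hfin
      have hne' : ((SubG G i).emit v').Nonempty := by
        obtain ⟨e, he⟩ := hne
        exact ⟨⟨e, hY he⟩, by rw [emit_SubG]; exact he⟩
      refine ⟨{Sum.inl v'},
        h'.toFinset.val.map fun e => (Sum.inl ((SubG G i).r e) : MGen (SubG G i)),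
        by simp [mapMS, mapGen]; rfl, ?_,
        AddConGen.Rel.of _ _ (MRel.reg v' h' hne')⟩
      show Multiset.map (mapGen (inclCK G i)) _ = _
      rw [mapMS_edge_multiset, emit_SubG_toFinset_map G i v' hfin hY h']
    | inf x =>
      refine ⟨{x.1.1}, ↑x.1.2, Set.countable_singleton _, x.1.2.countable_toSet, ?_⟩
      intro i hX hY
      have hv : x.1.1 ∈ i.1.1 := hX rfl
      have hS : ∀ e ∈ x.1.2, e ∈ i.1.2 := fun e he => hY he
      set x' := liftInf G i x hv hS with hx'
      refine ⟨{Sum.inl x'.1.1},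
        {Sum.inr x'} + x'.1.2.val.map fun e => (Sum.inl ((SubG G i).r e) : MGen (SubG G i)),
        by simp [mapMS, mapGen]; rfl, ?_,
        AddConGen.Rel.of _ _ (MRel.inf x')⟩
      show Multiset.map (mapGen (inclCK G i)) _ = _
      rw [Multiset.map_add, mapMS_edge_multiset]
      congr 1
      · show ({Sum.inr (pushInf (inclCK G i) x')} : Multiset (MGen G)) = _
        rw [hx', pushInf_liftInf]
      · show ((liftF G i x.1.2 hS).val.map Subtype.val).map _ = _
        rw [liftF_val_map]
    | exch x y hxy =>
      refine ⟨{x.1.1}, ↑x.1.2 ∪ ↑y.1.2, Set.countable_singleton _,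
        (x.1.2.countable_toSet).union (y.1.2.countable_toSet), ?_⟩
      intro i hX hY
      have hvx : x.1.1 ∈ i.1.1 := hX rfl
      have hvy : y.1.1 ∈ i.1.1 := hxy ▸ hvx
      have hSx : ∀ e ∈ x.1.2, e ∈ i.1.2 := fun e he => hY (Or.inl he)
      have hSy : ∀ e ∈ y.1.2, e ∈ i.1.2 := fun e he => hY (Or.inr he)
      set x' := liftInf G i x hvx hSx with hx'
      set y' := liftInf G i y hvy hSy with hy'
      have hvv : x'.1.1 = y'.1.1 := Subtype.ext hxy
      refine ⟨{Sum.inr x'} +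
          ((x'.1.2 \ y'.1.2).val.map fun e => (Sum.inl ((SubG G i).r e) : MGen (SubG G i))),
        {Sum.inr y'} +
          ((y'.1.2 \ x'.1.2).val.map fun e => (Sum.inl ((SubG G i).r e) : MGen (SubG G i))),
        ?_, ?_, AddConGen.Rel.of _ _ (MRel.exch x' y' hvv)⟩
      · show Multiset.map (mapGen (inclCK G i)) _ = _
        rw [Multiset.map_add, mapMS_edge_multiset]
        congr 1
        · show ({Sum.inr (pushInf (inclCK G i) x')} : Multiset (MGen G)) = _
          rw [hx', pushInf_liftInf]
        · show (((liftF G i x.1.2 hSx) \ (liftF G i y.1.2 hSy)).val.map Subtype.val).map _ = _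
          rw [liftF_sdiff, liftF_val_map]
      · show Multiset.map (mapGen (inclCK G i)) _ = _
        rw [Multiset.map_add, mapMS_edge_multiset]
        congr 1
        · show ({Sum.inr (pushInf (inclCK G i) y')} : Multiset (MGen G)) = _
          rw [hy', pushInf_liftInf]
        · show (((liftF G i y.1.2 hSy) \ (liftF G i x.1.2 hSx)).val.map Subtype.val).map _ = _
          rw [liftF_sdiff, liftF_val_map]
  | refl a =>
    classical
    refine ⟨↑(a.toFinset.biUnion (gsuppV G)), ↑(a.toFinset.biUnion (gsuppE G)),
      Finset.countable_toSet _, Finset.countable_toSet _, ?_⟩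
    intro i hX hY
    have hsupp : ∀ g ∈ a, (∀ v ∈ gsuppV G g, v ∈ i.1.1) ∧ (∀ e ∈ gsuppE G g, e ∈ i.1.2) := by
      intro g hg
      refine ⟨fun v hv => hX ?_, fun e he => hY ?_⟩
      · exact Finset.mem_coe.2 (Finset.mem_biUnion.2 ⟨g, Multiset.mem_toFinset.2 hg, hv⟩)
      · exact Finset.mem_coe.2 (Finset.mem_biUnion.2 ⟨g, Multiset.mem_toFinset.2 hg, he⟩)
    obtain ⟨m', hm'⟩ := lift_ms G i a hsupp
    exact ⟨m', m', hm', hm', AddConGen.Rel.refl m'⟩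
  | symm _ ih =>
    obtain ⟨X, Y, hXc, hYc, hP⟩ := ih
    refine ⟨X, Y, hXc, hYc, fun i hX hY => ?_⟩
    obtain ⟨a', b', ha, hb, hr⟩ := hP i hX hY
    exact ⟨b', a', hb, ha, hr.symm⟩
  | trans _ _ ih1 ih2 =>
    obtain ⟨X1, Y1, hX1, hY1, hP1⟩ := ih1
    obtain ⟨X2, Y2, hX2, hY2, hP2⟩ := ih2
    refine ⟨X1 ∪ X2, Y1 ∪ Y2, hX1.union hX2, hY1.union hY2, fun i hX hY => ?_⟩
    obtain ⟨a', c', ha, hc, hr1⟩ := hP1 i (Set.union_subset_iff.1 hX).1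
      (Set.union_subset_iff.1 hY).1
    obtain ⟨c'', b', hc', hb, hr2⟩ := hP2 i (Set.union_subset_iff.1 hX).2
      (Set.union_subset_iff.1 hY).2
    have : c' = c'' := mapMS_injective (inclCK G i) (hc.trans hc'.symm)
    exact ⟨a', b', ha, hb, hr1.trans (this ▸ hr2)⟩
  | add _ _ ih1 ih2 =>
    obtain ⟨X1, Y1, hX1, hY1, hP1⟩ := ih1
    obtain ⟨X2, Y2, hX2, hY2, hP2⟩ := ih2
    refine ⟨X1 ∪ X2, Y1 ∪ Y2, hX1.union hX2, hY1.union hY2, fun i hX hY => ?_⟩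
    obtain ⟨a', b', ha, hb, hr1⟩ := hP1 i (Set.union_subset_iff.1 hX).1
      (Set.union_subset_iff.1 hY).1
    obtain ⟨c', d', hc, hd, hr2⟩ := hP2 i (Set.union_subset_iff.1 hX).2
      (Set.union_subset_iff.1 hY).2
    exact ⟨a' + c', b' + d', by rw [mapMS_add, ha, hc], by rw [mapMS_add, hb, hd],
      hr1.add hr2⟩

end Lifting

section Comp

variable (G : DGraph)

lemma mapGen_comp (i j : Idx G) (h : i ≤ j) (g : MGen (SubG G i)) :
    mapGen (inclCK G j) (mapGen (stepCK G i j h) g) = mapGen (inclCK G i) g := by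
  cases g with
  | inl v => rfl
  | inr x =>
    show Sum.inr (pushInf (inclCK G j) (pushInf (stepCK G i j h) x)) =
      Sum.inr (pushInf (inclCK G i) x)
    congr 1
    apply Subtype.ext
    apply Prod.ext
    · rfl
    · show ((x.1.2.image _).image _) = x.1.2.image _
      rw [Finset.image_image]
      rfl

lemma mapMS_comp (i j : Idx G) (h : i ≤ j) (m : Multiset (MGen (SubG G i))) :
    mapMS (inclCK G j) (mapMS (stepCK G i j h) m) = mapMS (inclCK G i) m := by
  simp only [mapMS, Multiset.map_map]
  exact Multiset.map_congr rfl (fun g _ => mapGen_comp G i j h g)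

lemma mk'_eq_mk'_iff (A : DGraph) (a b : Multiset (MGen A)) :
    (addConGen (MRel A)).mk' a = (addConGen (MRel A)).mk' b ↔
      AddConGen.Rel (MRel A) a b := by
  rw [show ((addConGen (MRel A)).mk' : _ → _) = ((↑) : _ → (addConGen (MRel A)).Quotient)
    from AddCon.coe_mk']
  rw [AddCon.eq]
  rfl

end Comp

/-- Every (possibly uncountable) directed graph `E` is the direct limit,
in the category of graphs with CK-morphisms, of a directed system of countable graphs, and
the graph monoid functor `M̄` is continuous: the canonical map from the colimit of the
`M̄_{E_i}` to `M̄_E` is a monoid isomorphism — equivalently, for any family of induced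
monoid maps `M̄(φ_{ij})`, `M̄(φ_{i,∞})`, the maps `M̄(φ_{i,∞})` are jointly surjective and
identify exactly the eventually equal elements. -/
theorem Mbar_continuous (G : DGraph) :
    ∃ (I : Type) (_ : Preorder I) (_ : IsDirected I (· ≤ ·))
      (Gi : I → DGraph) (φ : ∀ i j, i ≤ j → CKHom (Gi i) (Gi j))
      (ψ : ∀ i, CKHom (Gi i) G),
      (∀ i, Countable (Gi i).V ∧ Countable (Gi i).E) ∧
      (∀ i j (h : i ≤ j) (v : (Gi i).V), (ψ j).fV ((φ i j h).fV v) = (ψ i).fV v) ∧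
      (∀ i j (h : i ≤ j) (e : (Gi i).E), (ψ j).fE ((φ i j h).fE e) = (ψ i).fE e) ∧
      (∀ v : G.V, ∃ (i : I) (w : (Gi i).V), (ψ i).fV w = v) ∧
      (∀ e : G.E, ∃ (i : I) (f : (Gi i).E), (ψ i).fE f = e) ∧
      (∀ (Mφ : ∀ i j, i ≤ j → (Mbar (Gi i) →+ Mbar (Gi j)))
         (Mψ : ∀ i, Mbar (Gi i) →+ Mbar G),
        (∀ i j (h : i ≤ j) (v : (Gi i).V),
          Mφ i j h (genV (Gi i) v) = genV (Gi j) ((φ i j h).fV v)) →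
        (∀ i j (h : i ≤ j) (x : InfGen (Gi i)) (y : InfGen (Gi j)),
          y.1.1 = (φ i j h).fV x.1.1 → y.1.2 = x.1.2.image (φ i j h).fE →
          Mφ i j h (genS (Gi i) x) = genS (Gi j) y) →
        (∀ i (v : (Gi i).V), Mψ i (genV (Gi i) v) = genV G ((ψ i).fV v)) →
        (∀ i (x : InfGen (Gi i)) (y : InfGen G),
          y.1.1 = (ψ i).fV x.1.1 → y.1.2 = x.1.2.image (ψ i).fE →
          Mψ i (genS (Gi i) x) = genS G y) →
        ((∀ z : Mbar G, ∃ (i : I) (x : Mbar (Gi i)), Mψ i x = z) ∧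
         (∀ i (x y : Mbar (Gi i)), Mψ i x = Mψ i y →
            ∃ (j : I) (h : i ≤ j), Mφ i j h x = Mφ i j h y))) := by
  refine ⟨Idx G, inferInstance, inferInstance, SubG G, stepCK G, inclCK G,
    ?_, fun _ _ _ _ => rfl, fun _ _ _ _ => rfl, ?_, ?_, ?_⟩
  · intro i
    exact ⟨i.2.1.to_subtype, i.2.2.1.to_subtype⟩
  · intro v
    obtain ⟨i, hX, -⟩ := exists_closure G {v} ∅ (Set.countable_singleton v)
      Set.countable_empty
    exact ⟨i, ⟨v, hX rfl⟩, rfl⟩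
  · intro e
    obtain ⟨i, -, hY⟩ := exists_closure G ∅ {e} Set.countable_empty
      (Set.countable_singleton e)
    exact ⟨i, ⟨e, hY rfl⟩, rfl⟩
  · intro Mφ Mψ hφV hφS hψV hψS
    have hψ : ∀ i (m : Multiset (MGen (SubG G i))),
        Mψ i ((addConGen (MRel (SubG G i))).mk' m) =
          (addConGen (MRel G)).mk' (mapMS (inclCK G i) m) := fun i m =>
      hom_map_mk' (inclCK G i) (Mψ i) (hψV i)
        (fun x => hψS i x (pushInf (inclCK G i) x) rfl rfl) m
    have hφ : ∀ i j (h : i ≤ j) (m : Multiset (MGen (SubG G i))),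
        Mφ i j h ((addConGen (MRel (SubG G i))).mk' m) =
          (addConGen (MRel (SubG G j))).mk' (mapMS (stepCK G i j h) m) := fun i j h m =>
      hom_map_mk' (stepCK G i j h) (Mφ i j h) (hφV i j h)
        (fun x => hφS i j h x (pushInf (stepCK G i j h) x) rfl rfl) m
    constructor
    · -- joint surjectivity
      intro z
      obtain ⟨m, rfl⟩ := AddCon.mk'_surjective z
      induction m using Multiset.induction_on with
      | empty =>
        obtain ⟨i, -, -⟩ := exists_closure G ∅ ∅ Set.countable_empty Set.countable_empty
        exact ⟨i, 0, by simp; rfl⟩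
      | cons g m ih =>
        obtain ⟨i1, x1, hx1⟩ := ih
        have hg : ∃ (i : Idx G) (x : Mbar (SubG G i)),
            Mψ i x = (addConGen (MRel G)).mk' {g} := by
          cases g with
          | inl v =>
            obtain ⟨i, hX, -⟩ := exists_closure G {v} ∅ (Set.countable_singleton v)
              Set.countable_empty
            refine ⟨i, genV _ ⟨v, hX rfl⟩, ?_⟩
            exact (hψV i _).trans rfl
          | inr y =>
            obtain ⟨i, hX, hY⟩ := exists_closure G {y.1.1} ↑y.1.2
              (Set.countable_singleton _) y.1.2.countable_toSet
            have hv : y.1.1 ∈ i.1.1 := hX rfl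
            have hS : ∀ e ∈ y.1.2, e ∈ i.1.2 := fun e he => hY he
            refine ⟨i, genS _ (liftInf G i y hv hS), ?_⟩
            rw [hψS i (liftInf G i y hv hS) y rfl (liftF_image_val G (hS := hS)).symm]
            rfl
        obtain ⟨i2, x2, hx2⟩ := hg
        obtain ⟨j, h1, h2⟩ := (idxDirected G).directed i1 i2
        have hcompat : ∀ (i : Idx G) (h : i ≤ j) (x : Mbar (SubG G i)),
            Mψ j (Mφ i j h x) = Mψ i x := by
          intro i h x
          obtain ⟨m', rfl⟩ := AddCon.mk'_surjective x
          rw [hφ, hψ, hψ, mapMS_comp]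
        refine ⟨j, Mφ i1 j h1 x1 + Mφ i2 j h2 x2, ?_⟩
        rw [map_add, hcompat i1 h1, hcompat i2 h2, hx1, hx2,
          show g ::ₘ m = {g} + m from (Multiset.singleton_add g m).symm, map_add]
        exact add_comm _ _
    · -- eventual identification
      intro i x y hxy
      obtain ⟨m, rfl⟩ := AddCon.mk'_surjective x
      obtain ⟨n, rfl⟩ := AddCon.mk'_surjective y
      replace hxy := (mk'_eq_mk'_iff _ _ _).1 ((hψ i m).symm.trans (hxy.trans (hψ i n)))
      obtain ⟨X, Y, hXc, hYc, hP⟩ := lift_rel G _ _ hxy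
      obtain ⟨j, hXj, hYj⟩ := exists_closure G (X ∪ i.1.1) (Y ∪ i.1.2)
        (hXc.union i.2.1) (hYc.union i.2.2.1)
      have hij : i ≤ j := ⟨(Set.union_subset_iff.1 hXj).2, (Set.union_subset_iff.1 hYj).2⟩
      obtain ⟨m', n', hm', hn', hrel⟩ := hP j (Set.union_subset_iff.1 hXj).1
        (Set.union_subset_iff.1 hYj).1
      have em : mapMS (stepCK G i j hij) m = m' :=
        mapMS_injective (inclCK G j) (by rw [mapMS_comp, hm'])
      have en : mapMS (stepCK G i j hij) n = n' :=
        mapMS_injective (inclCK G j) (by rw [mapMS_comp, hn'])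
      refine ⟨j, hij, ?_⟩
      rw [hφ, hφ, em, en]
      exact (mk'_eq_mk'_iff _ _ _).2 hrel
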